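/- Let 𝒫 = ⟨P, ⊴⟩ be a partial order PR, let C ∈ P, S = pre(μ𝒫(C)), and suppose a block B ∈ P is split into B₁ = B ∩ S and B₂ = B \ S, both nonempty. Define ⊴' on the split partition by D ⊴' E iff parent_P(D) ⊴ parent_P(E), and then refine ⊴' by removing pairs (X,Y) with X →∃ E, X ⊴' Y, Y not→∃ μ(E) for some block E. Then the pair (B₁, B₂) is removed, i.e., B₁ and B₂ are not related after relation stabilization: there exists a block E with B₁ →∃ E but B₂ ∩ pre(μ(E)) = ∅. -/
import Mathlib


/-- `P` is a partition of the whole state space. -/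
def IsPartition {α : Type*} (P : Set (Set α)) : Prop :=
  (∀ B ∈ P, B.Nonempty) ∧ (∀ x : α, ∃! B, B ∈ P ∧ x ∈ B)

/-- `Split(P,S)` replaces each block `B` by the nonempty sets among
`B ∩ S` and `B \ S`. -/
def SplitP {α : Type*} (P : Set (Set α)) (S : Set α) : Set (Set α) :=
  {X | ∃ B ∈ P, (X = B ∩ S ∨ X = B \ S) ∧ X.Nonempty}

/-- `pre(T) = {s | ∃ t ∈ T, s → t}`. -/
def preR {α : Type*} (tr : α → α → Prop) (T : Set α) : Set α :=
  {s | ∃ t ∈ T, tr s t}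

/-- `S₁ →∃ S₂` iff some state of `S₁` has a transition into `S₂`. -/
def exE {α : Type*} (tr : α → α → Prop) (S T : Set α) : Prop :=
  ∃ s ∈ S, ∃ t ∈ T, tr s t

/-- `μ𝒫(C) = ⋃ {E ∈ P | C ⊴ E}` for a block `C` of `P`. -/
def muBlk {α : Type*} (P : Set (Set α)) (ord : Set α → Set α → Prop)
    (C : Set α) : Set α :=
  ⋃₀ {E | E ∈ P ∧ ord C E}

/-- Antisymmetry restoration: if a block `B` of a partial order PR
`⟨P,⊴⟩` is split by `S = pre(μ𝒫(C))` into nonempty `B₁ = B ∩ S` and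
`B₂ = B \ S`, then after lifting `⊴` to the split partition there is a block
`E` of the split partition with `B₁ →∃ E` and `B₂ ∩ pre(μ𝒫'(E)) = ∅`, so the
pair `(B₁,B₂)` is removed by relation stabilization. -/
theorem stmt12 {α : Type*} (tr : α → α → Prop)
    (P : Set (Set α)) (hP : IsPartition P)
    (ord : Set α → Set α → Prop)
    (hrefl : ∀ B ∈ P, ord B B)
    (htrans : ∀ B ∈ P, ∀ C ∈ P, ∀ D ∈ P, ord B C → ord C D → ord B D)
    (hantisym : ∀ B ∈ P, ∀ C ∈ P, ord B C → ord C B → B = C)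
    (C : Set α) (hC : C ∈ P)
    (B : Set α) (hB : B ∈ P)
    (h1 : (B ∩ preR tr (muBlk P ord C)).Nonempty)
    (h2 : (B \ preR tr (muBlk P ord C)).Nonempty) :
    let S := preR tr (muBlk P ord C)
    let P' := SplitP P S
    let ord' : Set α → Set α → Prop :=
      fun D E => ∃ X ∈ P, ∃ Y ∈ P, D ⊆ X ∧ E ⊆ Y ∧ ord X Y
    ∃ E ∈ P', exE tr (B ∩ S) E ∧
      (B \ S) ∩ preR tr (muBlk P' ord' E) = ∅ := by
  intro S P' ord'
  obtain ⟨s, hsB, t, htmu, hst⟩ := h1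
  obtain ⟨F, ⟨hF, hCF⟩, htF⟩ := htmu
  -- E := piece of F containing t
  by_cases htS : t ∈ S
  case pos =>
    refine ⟨F ∩ S, ⟨F, hF, Or.inl rfl, ⟨t, htF, htS⟩⟩, ⟨s, ⟨hsB, t, ⟨F, ⟨hF, hCF⟩, htF⟩, hst⟩, t, ⟨htF, htS⟩, hst⟩, ?_⟩
    ext x
    simp only [Set.mem_inter_iff, Set.mem_empty_iff_false, iff_false]
    rintro ⟨⟨hxB, hxS⟩, u, humu, hxu⟩
    obtain ⟨D, ⟨hD, X, hX, Y, hY, hEX, hDY, hXY⟩, huD⟩ := humu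
    have hXF : X = F := by
      obtain ⟨W, hW, huniq⟩ := hP.2 t
      exact (huniq X ⟨hX, hEX ⟨htF, htS⟩⟩).trans (huniq F ⟨hF, htF⟩).symm
    exact hxS ⟨u, ⟨Y, ⟨hY, htrans C hC F hF Y hY hCF (hXF ▸ hXY)⟩, hDY huD⟩, hxu⟩
  case neg =>
    refine ⟨F \ S, ⟨F, hF, Or.inr rfl, ⟨t, htF, htS⟩⟩, ⟨s, ⟨hsB, t, ⟨F, ⟨hF, hCF⟩, htF⟩, hst⟩, t, ⟨htF, htS⟩, hst⟩, ?_⟩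
    ext x
    simp only [Set.mem_inter_iff, Set.mem_empty_iff_false, iff_false]
    rintro ⟨⟨hxB, hxS⟩, u, humu, hxu⟩
    obtain ⟨D, ⟨hD, X, hX, Y, hY, hEX, hDY, hXY⟩, huD⟩ := humu
    have hXF : X = F := by
      obtain ⟨W, hW, huniq⟩ := hP.2 t
      exact (huniq X ⟨hX, hEX ⟨htF, htS⟩⟩).trans (huniq F ⟨hF, htF⟩).symm
    exact hxS ⟨u, ⟨Y, ⟨hY, htrans C hC F hF Y hY hCF (hXF ▸ hXY)⟩, hDY huD⟩, hxu⟩
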